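/- arXiv:1605.06288 — 2 statements merged into one kernel-verified Lean document; each statement's English description precedes it below -/
import Mathlib

section
/- Let x, u : ℝ² → ℝ³ and let θ be a point at which x and u are twice differentiable. Write a_α = ∂x/∂θ^α(θ), u,_α = ∂u/∂θ^α(θ), a_{α,β} = ∂²x/∂θ^α∂θ^β(θ), u,_{αβ} = ∂²u/∂θ^α∂θ^β(θ), and assume a₁ × a₂ ≠ 0; set a₃ = (a₁ × a₂)/‖a₁ × a₂‖. For ε ∈ ℝ let x_ε = x + ε u and define the second-fundamental-form coefficient of the deformed surface b_{αβ}(ε) = [ (∂₁x_ε × ∂₂x_ε)/‖∂₁x_ε × ∂₂x_ε‖ ] · ∂²x_ε/∂θ^α∂θ^β, evaluated at θ. Then ε ↦ b_{αβ}(ε) is differentiable at ε = 0 and its derivative equals −β_{αβ}, where β_{αβ} = − u,_{αβ}·a₃ + (1/‖a₁×a₂‖) [ u,₁·(a_{α,β} × a₂) + u,₂·(a₁ × a_{α,β}) ] + (a₃·a_{α,β}/‖a₁×a₂‖) [ u,₁·(a₂ × a₃) + u,₂·(a₃ × a₁) ] is the linearised bending strain of the Kirchhoff-Love shell model. -/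
open Matrix

/-- The Euclidean norm of a vector in `ℝ³` (represented as `Fin 3 → ℝ`). -/
noncomputable def euclNorm3 (v : Fin 3 → ℝ) : ℝ :=
  ‖(EuclideanSpace.equiv (Fin 3) ℝ).symm v‖

lemma euclNorm3_eq_sqrt (v : Fin 3 → ℝ) : euclNorm3 v = Real.sqrt (v ⬝ᵥ v) := by
  simp [euclNorm3, EuclideanSpace.norm_eq, dotProduct, Real.norm_eq_abs, sq_abs, sq]

lemma euclNorm3_pos {v : Fin 3 → ℝ} (hv : v ≠ 0) : 0 < euclNorm3 v := by
  rw [euclNorm3, norm_pos_iff]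
  simpa using hv

lemma hasDerivAt_dot3 {f g : ℝ → Fin 3 → ℝ} {f' g' : Fin 3 → ℝ} {t : ℝ}
    (hf : HasDerivAt f f' t) (hg : HasDerivAt g g' t) :
    HasDerivAt (fun s => f s ⬝ᵥ g s) (f' ⬝ᵥ g t + f t ⬝ᵥ g') t := by
  have h : HasDerivAt (fun s => ∑ i, f s i * g s i)
      (∑ i, (f' i * g t i + f t i * g' i)) t :=
    HasDerivAt.fun_sum (fun i _ => (hasDerivAt_pi.mp hf i).mul (hasDerivAt_pi.mp hg i))
  simpa [dotProduct, Finset.sum_add_distrib] using h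

set_option maxHeartbeats 800000

/-- **Linearised bending strain of the Kirchhoff–Love shell model.**
Let `x u : ℝ² → ℝ³` be twice differentiable at `θ`, with covariant base vectors
`a_α = ∂x/∂θ^α`, displacement derivatives `u,_α`, second derivatives `a_{α,β}`, `u,_{αβ}`,
`a₁ × a₂ ≠ 0` and unit normal `a₃ = (a₁ × a₂)/‖a₁ × a₂‖`.  For `ε ∈ ℝ` let `x_ε = x + ε u`
and let `b(ε)` be the second-fundamental-form coefficient of the deformed surface
`b_{αβ}(ε) = [(∂₁x_ε × ∂₂x_ε)/‖∂₁x_ε × ∂₂x_ε‖] · ∂²x_ε/∂θ^α∂θ^β` at `θ`.  Then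
`ε ↦ b(ε)` is differentiable at `ε = 0` with derivative `−β_{αβ}`, where `β_{αβ}` is the
linearised bending strain
`β_{αβ} = −u,_{αβ}·a₃ + (1/‖a₁×a₂‖)[u,₁·(a_{α,β}×a₂) + u,₂·(a₁×a_{α,β})]
          + (a₃·a_{α,β}/‖a₁×a₂‖)[u,₁·(a₂×a₃) + u,₂·(a₃×a₁)]`. -/
theorem bending_strain_is_linearised_second_fundamental_form
    (x u : (Fin 2 → ℝ) → (Fin 3 → ℝ)) (θ : Fin 2 → ℝ)
    (hx : ContDiffAt ℝ 2 x θ) (hu : ContDiffAt ℝ 2 u θ)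
    (α β : Fin 2)
    (a₁ a₂ u₁ u₂ aαβ uαβ a₃ : Fin 3 → ℝ)
    (ha₁ : a₁ = fderiv ℝ x θ (Pi.single (0 : Fin 2) (1 : ℝ)))
    (ha₂ : a₂ = fderiv ℝ x θ (Pi.single (1 : Fin 2) (1 : ℝ)))
    (hu₁ : u₁ = fderiv ℝ u θ (Pi.single (0 : Fin 2) (1 : ℝ)))
    (hu₂ : u₂ = fderiv ℝ u θ (Pi.single (1 : Fin 2) (1 : ℝ)))
    (haαβ : aαβ =
      fderiv ℝ (fun p => fderiv ℝ x p (Pi.single α (1 : ℝ))) θ (Pi.single β (1 : ℝ)))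
    (huαβ : uαβ =
      fderiv ℝ (fun p => fderiv ℝ u p (Pi.single α (1 : ℝ))) θ (Pi.single β (1 : ℝ)))
    (hcross : a₁ ⨯₃ a₂ ≠ 0)
    (ha₃ : a₃ = (euclNorm3 (a₁ ⨯₃ a₂))⁻¹ • (a₁ ⨯₃ a₂))
    (b : ℝ → ℝ)
    (hb : ∀ ε : ℝ, b ε =
      ((euclNorm3 ((fderiv ℝ (fun p => x p + ε • u p) θ (Pi.single (0 : Fin 2) (1 : ℝ))) ⨯₃
            (fderiv ℝ (fun p => x p + ε • u p) θ (Pi.single (1 : Fin 2) (1 : ℝ)))))⁻¹ •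
          ((fderiv ℝ (fun p => x p + ε • u p) θ (Pi.single (0 : Fin 2) (1 : ℝ))) ⨯₃
            (fderiv ℝ (fun p => x p + ε • u p) θ (Pi.single (1 : Fin 2) (1 : ℝ))))) ⬝ᵥ
        fderiv ℝ (fun p => fderiv ℝ (fun q => x q + ε • u q) p (Pi.single α (1 : ℝ))) θ
          (Pi.single β (1 : ℝ))) :
    HasDerivAt b
      (-(-(uαβ ⬝ᵥ a₃) +
          (euclNorm3 (a₁ ⨯₃ a₂))⁻¹ * (u₁ ⬝ᵥ (aαβ ⨯₃ a₂) + u₂ ⬝ᵥ (a₁ ⨯₃ aαβ)) +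
          (a₃ ⬝ᵥ aαβ / euclNorm3 (a₁ ⨯₃ a₂)) * (u₁ ⬝ᵥ (a₂ ⨯₃ a₃) + u₂ ⬝ᵥ (a₃ ⨯₃ a₁))))
      0 := by
  have hxd : DifferentiableAt ℝ x θ := hx.differentiableAt (by norm_num)
  have hud : DifferentiableAt ℝ u θ := hu.differentiableAt (by norm_num)
  have hx1 : DifferentiableAt ℝ (fderiv ℝ x) θ :=
    (hx.fderiv_right (m := 1) (by norm_num)).differentiableAt one_ne_zero
  have hu1 : DifferentiableAt ℝ (fderiv ℝ u) θ :=
    (hu.fderiv_right (m := 1) (by norm_num)).differentiableAt one_ne_zero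
  have hx2 : DifferentiableAt ℝ (fun p => fderiv ℝ x p (Pi.single α (1:ℝ))) θ :=
    hx1.clm_apply (differentiableAt_const _)
  have hu2 : DifferentiableAt ℝ (fun p => fderiv ℝ u p (Pi.single α (1:ℝ))) θ :=
    hu1.clm_apply (differentiableAt_const _)
  have hev : ∀ ε : ℝ, (fun p => fderiv ℝ (fun q => x q + ε • u q) p (Pi.single α (1:ℝ)))
      =ᶠ[nhds θ] (fun p => fderiv ℝ x p (Pi.single α (1:ℝ)) +
        ε • fderiv ℝ u p (Pi.single α (1:ℝ))) := by
    intro ε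
    filter_upwards [hx.eventually (by simp), hu.eventually (by simp)] with p hxp hup
    have hxp' : DifferentiableAt ℝ x p := hxp.differentiableAt (by norm_num)
    have hup' : DifferentiableAt ℝ u p := hup.differentiableAt (by norm_num)
    rw [fderiv_fun_add (g := fun q => ε • u q) hxp' (hup'.const_smul ε), fderiv_fun_const_smul hup' ε]
    simp
  have key : ∀ ε : ℝ, b ε =
      (Real.sqrt ((((a₁ + ε • u₁) ⨯₃ (a₂ + ε • u₂)) ⬝ᵥ ((a₁ + ε • u₁) ⨯₃ (a₂ + ε • u₂)))))⁻¹ *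
        (((a₁ + ε • u₁) ⨯₃ (a₂ + ε • u₂)) ⬝ᵥ (aαβ + ε • uαβ)) := by
    intro ε
    have h1 : fderiv ℝ (fun p => x p + ε • u p) θ = fderiv ℝ x θ + ε • fderiv ℝ u θ := by
      rw [fderiv_fun_add (g := fun q => ε • u q) hxd (hud.const_smul ε), fderiv_fun_const_smul hud ε]
    have h2 : fderiv ℝ (fun p => fderiv ℝ (fun q => x q + ε • u q) p (Pi.single α (1:ℝ))) θ
        (Pi.single β (1:ℝ)) = aαβ + ε • uαβ := by
      rw [(hev ε).fderiv_eq, fderiv_fun_add (g := fun p => ε • fderiv ℝ u p (Pi.single α (1:ℝ))) hx2 (hu2.const_smul ε),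
        fderiv_fun_const_smul hu2 ε]
      simp [haαβ, huαβ]
    rw [hb ε, h1, h2]
    simp only [ContinuousLinearMap.add_apply, ContinuousLinearMap.smul_apply,
      ← ha₁, ← ha₂, ← hu₁, ← hu₂]
    rw [smul_dotProduct, euclNorm3_eq_sqrt, smul_eq_mul]
  have hNeq : ∀ ε : ℝ, (a₁ + ε • u₁) ⨯₃ (a₂ + ε • u₂) =
      (a₁ ⨯₃ a₂) + ε • ((u₁ ⨯₃ a₂) + (a₁ ⨯₃ u₂)) + (ε * ε) • (u₁ ⨯₃ u₂) := by
    intro ε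
    funext i
    fin_cases i <;>
      simp [cross_apply, Pi.add_apply, Pi.smul_apply, smul_eq_mul] <;> ring
  have hN : HasDerivAt (fun ε : ℝ => (a₁ + ε • u₁) ⨯₃ (a₂ + ε • u₂))
      ((u₁ ⨯₃ a₂) + (a₁ ⨯₃ u₂)) 0 := by
    have hfun : (fun ε : ℝ => (a₁ + ε • u₁) ⨯₃ (a₂ + ε • u₂)) =
        fun ε : ℝ => (a₁ ⨯₃ a₂) + ε • ((u₁ ⨯₃ a₂) + (a₁ ⨯₃ u₂)) + (ε * ε) • (u₁ ⨯₃ u₂) :=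
      funext hNeq
    rw [hfun]
    have h1 : HasDerivAt (fun ε : ℝ => ε • ((u₁ ⨯₃ a₂) + (a₁ ⨯₃ u₂)))
        ((u₁ ⨯₃ a₂) + (a₁ ⨯₃ u₂)) 0 := by
      simpa using (hasDerivAt_id (0:ℝ)).smul_const ((u₁ ⨯₃ a₂) + (a₁ ⨯₃ u₂))
    have h2 : HasDerivAt (fun ε : ℝ => (ε * ε) • (u₁ ⨯₃ u₂)) (0 : Fin 3 → ℝ) 0 := by
      simpa using ((hasDerivAt_id (0:ℝ)).mul (hasDerivAt_id (0:ℝ))).smul_const (u₁ ⨯₃ u₂)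
    simpa using ((hasDerivAt_const (0:ℝ) (a₁ ⨯₃ a₂)).fun_add h1).fun_add h2
  have hm : HasDerivAt (fun ε : ℝ => aαβ + ε • uαβ) uαβ 0 := by
    simpa using (hasDerivAt_const (0:ℝ) aαβ).fun_add ((hasDerivAt_id (0:ℝ)).smul_const uαβ)
  have hQ : HasDerivAt
      (fun ε : ℝ => ((a₁ + ε • u₁) ⨯₃ (a₂ + ε • u₂)) ⬝ᵥ ((a₁ + ε • u₁) ⨯₃ (a₂ + ε • u₂)))
      (((u₁ ⨯₃ a₂) + (a₁ ⨯₃ u₂)) ⬝ᵥ (a₁ ⨯₃ a₂) + (a₁ ⨯₃ a₂) ⬝ᵥ ((u₁ ⨯₃ a₂) + (a₁ ⨯₃ u₂)))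
      0 := by
    simpa using hasDerivAt_dot3 hN hN
  have hP : HasDerivAt
      (fun ε : ℝ => ((a₁ + ε • u₁) ⨯₃ (a₂ + ε • u₂)) ⬝ᵥ (aαβ + ε • uαβ))
      (((u₁ ⨯₃ a₂) + (a₁ ⨯₃ u₂)) ⬝ᵥ aαβ + (a₁ ⨯₃ a₂) ⬝ᵥ uαβ) 0 := by
    simpa using hasDerivAt_dot3 hN hm
  have hnpos : 0 < euclNorm3 (a₁ ⨯₃ a₂) := euclNorm3_pos hcross
  have hQ0 : ((a₁ + (0:ℝ) • u₁) ⨯₃ (a₂ + (0:ℝ) • u₂)) ⬝ᵥ ((a₁ + (0:ℝ) • u₁) ⨯₃ (a₂ + (0:ℝ) • u₂)) ≠ 0 := by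
    simp only [zero_smul, add_zero]
    intro h
    rw [euclNorm3_eq_sqrt, h, Real.sqrt_zero] at hnpos
    exact lt_irrefl 0 hnpos
  have hS := hQ.sqrt hQ0
  have hsne : Real.sqrt (((a₁ + (0:ℝ) • u₁) ⨯₃ (a₂ + (0:ℝ) • u₂)) ⬝ᵥ ((a₁ + (0:ℝ) • u₁) ⨯₃ (a₂ + (0:ℝ) • u₂))) ≠ 0 := by
    simp only [zero_smul, add_zero, ← euclNorm3_eq_sqrt]
    exact hnpos.ne'
  have hfinal := (hS.fun_inv hsne).fun_mul hP
  have hbfun : b = fun ε : ℝ =>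
      (Real.sqrt ((((a₁ + ε • u₁) ⨯₃ (a₂ + ε • u₂)) ⬝ᵥ ((a₁ + ε • u₁) ⨯₃ (a₂ + ε • u₂)))))⁻¹ *
        (((a₁ + ε • u₁) ⨯₃ (a₂ + ε • u₂)) ⬝ᵥ (aαβ + ε • uαβ)) := funext key
  rw [hbfun]
  refine hfinal.congr_deriv ?_
  simp only [zero_smul, add_zero, ← euclNorm3_eq_sqrt, ha₃]
  have hne : euclNorm3 (a₁ ⨯₃ a₂) ≠ 0 := hnpos.ne'
  generalize euclNorm3 (a₁ ⨯₃ a₂) = n at hne ⊢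
  simp [cross_apply, dotProduct, Fin.sum_univ_three, Pi.add_apply, Pi.smul_apply, smul_eq_mul]
  field_simp
  ring
end

section
/- Let A = (a^{αβ}) be a symmetric positive-definite real 2×2 matrix and let ν ∈ ℝ with −1 < ν < 1. Define H^{αβγδ} = ν a^{αβ} a^{γδ} + (1/2)(1 − ν)(a^{αγ} a^{βδ} + a^{αδ} a^{βγ}). Then for every symmetric real 2×2 matrix m = (m_{αβ}), the contraction Σ_{α,β,γ,δ} H^{αβγδ} m_{αβ} m_{γδ} is nonnegative, and it is zero if and only if m = 0. Consequently the membrane and bending energy densities W^m(α) = (1/2)(E t/(1−ν²)) α : H : α and W^b(β) = (1/2)(E t³/(12(1−ν²))) β : H : β are strictly positive on nonzero symmetric strain tensors whenever E > 0 and t > 0. -/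
open Matrix

lemma key_scalar (a b c x y z ν : ℝ) (ha : 0 < a) (hd : 0 < a * c - b ^ 2)
    (hν₁ : -1 < ν) (hν₂ : ν < 1) :
    0 ≤ (a*x+b*y)^2 + 2*(a*y+b*z)*(b*x+c*y) + (b*y+c*z)^2 + 2*ν*(a*c-b^2)*(x*z-y^2) ∧
    (((a*x+b*y)^2 + 2*(a*y+b*z)*(b*x+c*y) + (b*y+c*z)^2 + 2*ν*(a*c-b^2)*(x*z-y^2)) = 0 →
      x = 0 ∧ y = 0 ∧ z = 0) := by
  have h1 : (0:ℝ) < 1 + ν := by linarith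
  have h2 : (0:ℝ) < 1 - ν := by linarith
  have ha2 : (0:ℝ) < a ^ 2 := by positivity
  have key : a^2 * ((a*x+b*y)^2 + 2*(a*y+b*z)*(b*x+c*y) + (b*y+c*z)^2 + 2*ν*(a*c-b^2)*(x*z-y^2))
      = (1+ν)/2 * (a*(a*x+2*b*y+c*z))^2
        + (1-ν)/2 * (a^2*x+2*a*b*y+(2*b^2-a*c)*z)^2
        + (1-ν)/2 * (4*(a*c-b^2)*(a*y+b*z)^2) := by ring
  have e1 : 0 ≤ (1+ν)/2 * (a*(a*x+2*b*y+c*z))^2 := by positivity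
  have e2 : 0 ≤ (1-ν)/2 * (a^2*x+2*a*b*y+(2*b^2-a*c)*z)^2 := by positivity
  have e3 : 0 ≤ (1-ν)/2 * (4*(a*c-b^2)*(a*y+b*z)^2) := by positivity
  constructor
  · nlinarith [key, e1, e2, e3, ha2]
  · intro hQ0
    have hkey0 : (1+ν)/2 * (a*(a*x+2*b*y+c*z))^2
        + (1-ν)/2 * (a^2*x+2*a*b*y+(2*b^2-a*c)*z)^2
        + (1-ν)/2 * (4*(a*c-b^2)*(a*y+b*z)^2) = 0 := by
      rw [← key, hQ0]; ring
    have f1 : (1+ν)/2 * (a*(a*x+2*b*y+c*z))^2 = 0 := by linarith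
    have f2 : (1-ν)/2 * (a^2*x+2*a*b*y+(2*b^2-a*c)*z)^2 = 0 := by linarith
    have f3 : (1-ν)/2 * (4*(a*c-b^2)*(a*y+b*z)^2) = 0 := by linarith
    have hT0 : a*x+2*b*y+c*z = 0 := by
      have := (mul_eq_zero.mp f1).resolve_left (by positivity)
      have := pow_eq_zero_iff (two_ne_zero) |>.mp this
      exact (mul_eq_zero.mp this).resolve_left ha.ne'
    have hP0 : a^2*x+2*a*b*y+(2*b^2-a*c)*z = 0 := by
      have := (mul_eq_zero.mp f2).resolve_left (by positivity)
      exact pow_eq_zero_iff (two_ne_zero) |>.mp this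
    have hY0 : a*y+b*z = 0 := by
      have h4 : (a*y+b*z)^2 = 0 := by
        have := (mul_eq_zero.mp f3).resolve_left (by positivity)
        have h5 : (4*(a*c-b^2)) * (a*y+b*z)^2 = 0 := by linarith [this]
        exact (mul_eq_zero.mp h5).resolve_left (by positivity)
      exact pow_eq_zero_iff (two_ne_zero) |>.mp h4
    have hz : z = 0 := by
      have h2d : (2*(a*c-b^2)) * z = 0 := by linear_combination a * hT0 - hP0
      exact (mul_eq_zero.mp h2d).resolve_left (by positivity)
    have hy : y = 0 := by
      have hh : a * y = 0 := by linear_combination hY0 - b * hz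
      exact (mul_eq_zero.mp hh).resolve_left ha.ne'
    have hx : x = 0 := by
      have hh : a^2 * x = 0 := by linear_combination hP0 - 2*a*b*hy - (2*b^2-a*c)*hz
      exact (mul_eq_zero.mp hh).resolve_left ha2.ne'
    exact ⟨hx, hy, hz⟩


/-- **Positive definiteness of the Kirchhoff–Love elasticity tensor.**
Let `A = (a^{αβ})` be a symmetric positive-definite real `2 × 2` matrix and `−1 < ν < 1`.
With `H^{αβγδ} = ν a^{αβ} a^{γδ} + (1/2)(1−ν)(a^{αγ} a^{βδ} + a^{αδ} a^{βγ})`, the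
contraction `m : H : m = Σ H^{αβγδ} m_{αβ} m_{γδ}` is nonnegative on symmetric `2 × 2`
matrices `m`, vanishing iff `m = 0`.  Consequently, the membrane and bending energy
densities `W^m(α) = (1/2)(E t/(1−ν²)) α:H:α` and `W^b(β) = (1/2)(E t³/(12(1−ν²))) β:H:β`
are strictly positive on nonzero symmetric strain tensors whenever `E > 0` and `t > 0`. -/
theorem elasticity_tensor_positive_definite
    (A : Matrix (Fin 2) (Fin 2) ℝ) (hA : A.PosDef)
    (ν : ℝ) (hν₁ : -1 < ν) (hν₂ : ν < 1)
    (H : Fin 2 → Fin 2 → Fin 2 → Fin 2 → ℝ)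
    (hH : ∀ α β γ δ, H α β γ δ =
      ν * A α β * A γ δ + (1 / 2 : ℝ) * (1 - ν) * (A α γ * A β δ + A α δ * A β γ)) :
    (∀ m : Matrix (Fin 2) (Fin 2) ℝ, m.IsSymm →
        0 ≤ ∑ α, ∑ β, ∑ γ, ∑ δ, H α β γ δ * m α β * m γ δ ∧
        ((∑ α, ∑ β, ∑ γ, ∑ δ, H α β γ δ * m α β * m γ δ) = 0 ↔ m = 0)) ∧
      (∀ E t : ℝ, 0 < E → 0 < t →
        ∀ m : Matrix (Fin 2) (Fin 2) ℝ, m.IsSymm → m ≠ 0 →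
          0 < (1 / 2 : ℝ) * (E * t / (1 - ν ^ 2)) *
              ∑ α, ∑ β, ∑ γ, ∑ δ, H α β γ δ * m α β * m γ δ ∧
          0 < (1 / 2 : ℝ) * (E * t ^ 3 / (12 * (1 - ν ^ 2))) *
              ∑ α, ∑ β, ∑ γ, ∑ δ, H α β γ δ * m α β * m γ δ) := by
  
  have hA10 : A 1 0 = A 0 1 := by
    have := hA.1.apply 0 1
    simpa using this
  have ha : 0 < A 0 0 := by
    have h := hA.dotProduct_mulVec_pos (x := ![1, 0]) (by simp [funext_iff, Fin.forall_fin_two])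
    simpa [dotProduct, mulVec, Fin.sum_univ_two] using h
  have hdet : 0 < A 0 0 * A 1 1 - A 0 1 ^ 2 := by
    have h := hA.det_pos
    rw [Matrix.det_fin_two, hA10] at h
    nlinarith [h]
  have main : ∀ m : Matrix (Fin 2) (Fin 2) ℝ, m.IsSymm →
      0 ≤ ∑ α, ∑ β, ∑ γ, ∑ δ, H α β γ δ * m α β * m γ δ ∧
      ((∑ α, ∑ β, ∑ γ, ∑ δ, H α β γ δ * m α β * m γ δ) = 0 ↔ m = 0) := by
    intro m hm
    have hm10 : m 1 0 = m 0 1 := by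
      have := congrFun (congrFun hm 0) 1
      simpa [Matrix.transpose_apply] using this
    have hsum : (∑ α, ∑ β, ∑ γ, ∑ δ, H α β γ δ * m α β * m γ δ)
        = (A 0 0 * m 0 0 + A 0 1 * m 0 1)^2
          + 2*(A 0 0 * m 0 1 + A 0 1 * m 1 1)*(A 0 1 * m 0 0 + A 1 1 * m 0 1)
          + (A 0 1 * m 0 1 + A 1 1 * m 1 1)^2
          + 2*ν*(A 0 0 * A 1 1 - A 0 1 ^ 2)*(m 0 0 * m 1 1 - m 0 1 ^ 2) := by
      simp only [Fin.sum_univ_two, hH, hA10, hm10]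
      ring
    obtain ⟨hnn, hzero⟩ :=
      key_scalar (A 0 0) (A 0 1) (A 1 1) (m 0 0) (m 0 1) (m 1 1) ν ha hdet hν₁ hν₂
    rw [hsum]
    refine ⟨hnn, ⟨fun h => ?_, fun h => ?_⟩⟩
    · obtain ⟨hx, hy, hz⟩ := hzero h
      ext i j
      fin_cases i <;> fin_cases j <;> simp only [Matrix.zero_apply]
      · exact hx
      · exact hy
      · exact hm10.trans hy
      · exact hz
    · rw [h]
      simp
  refine ⟨main, fun E t hE ht m hm hm0 => ?_⟩
  obtain ⟨hnn, hzero⟩ := main m hm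
  have hQ : 0 < ∑ α, ∑ β, ∑ γ, ∑ δ, H α β γ δ * m α β * m γ δ :=
    hnn.lt_of_ne' (fun h => hm0 (hzero.mp h))
  have hν2 : 0 < 1 - ν ^ 2 := by nlinarith
  constructor
  · exact mul_pos (by positivity) hQ
  · exact mul_pos (by positivity) hQ
end
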